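/- arXiv:1411.5915 — 6 statements merged into one kernel-verified Lean document; each statement's English description precedes it below -/
import Mathlib

section
/- For every σ > 0 and every v ∈ ℝ, the Laplacian density with variance σ² admits the scale-mixture-of-Gaussians representation with exponential mixing density: ∫₀^∞ (2πτ)^(−1/2) · exp(−v²/(2τ)) · σ^(−2) · exp(−τ/σ²) dτ = (√2 · σ)^(−1) · exp(−√2·|v|/σ). -/
open Real MeasureTheory
open Set

lemma gaussian_Ioi (b : ℝ) (hb : 0 < b) :
    ∫ u in Ioi (0:ℝ), Real.exp (-(b * u ^ 2)) = Real.sqrt (π / b) / 2 := by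
  have h := integral_comp_abs (f := fun x => Real.exp (-(b * x ^ 2)))
  simp only [sq_abs] at h
  rw [show (fun x : ℝ => Real.exp (-(b * x ^ 2))) = fun x : ℝ => Real.exp (-b * x ^ 2) by
    funext x; ring_nf] at h
  rw [integral_gaussian] at h
  simp only [neg_mul] at h
  linarith


lemma glasser (c d : ℝ) (hc : 0 < c) (hd : 0 < d) :
    ∫ u in Ioi (0:ℝ), Real.exp (-((d * u - c / u) ^ 2)) = Real.sqrt π / (2 * d) := by
  set f : ℝ → ℝ := fun u => d * u - c / u with hf
  -- derivative
  have hder : ∀ x ∈ Ioi (0:ℝ), HasDerivWithinAt f (d + c / x ^ 2) (Ioi 0) x := by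
    intro x hx
    have hx0 : x ≠ 0 := ne_of_gt hx
    have h1 : HasDerivAt (fun u : ℝ => d * u) d x := by
      simpa using (hasDerivAt_id x).const_mul d
    have h2 : HasDerivAt (fun u : ℝ => c / u) (-(c / x ^ 2)) x := by
      have := (hasDerivAt_inv hx0).const_mul c
      simpa [div_eq_mul_inv, mul_comm, sq, mul_inv] using this
    have := h1.sub h2
    have h3 : HasDerivWithinAt f (d - -(c / x ^ 2)) (Ioi 0) x := this.hasDerivWithinAt
    rw [sub_neg_eq_add] at h3
    exact h3
  -- injective
  have hinj : InjOn f (Ioi 0) := by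
    apply StrictMonoOn.injOn
    intro x hx y hy hxy
    have : c / y < c / x := div_lt_div_of_pos_left hc hx hxy
    have : d * x < d * y := by exact mul_lt_mul_of_pos_left hxy hd
    simp only [hf]
    linarith [div_lt_div_of_pos_left hc (show (0:ℝ) < x from hx) hxy]
  -- surjective onto ℝ
  have himg : f '' Ioi 0 = univ := by
    apply eq_univ_of_forall
    intro y
    set s := Real.sqrt (y ^ 2 + 4 * c * d) with hs
    have hs2 : s ^ 2 = y ^ 2 + 4 * c * d := Real.sq_sqrt (by nlinarith)
    have habs : |y| < s := by
      have h1 : |y| ^ 2 < s ^ 2 := by rw [sq_abs, hs2]; nlinarith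
      exact lt_of_pow_lt_pow_left₀ 2 (Real.sqrt_nonneg _) h1
    have hupos : 0 < (y + s) / (2 * d) := by
      have := neg_abs_le y
      apply div_pos (by linarith) (by linarith)
    refine ⟨(y + s) / (2 * d), hupos, ?_⟩
    have hu0 : (y + s) / (2 * d) ≠ 0 := ne_of_gt hupos
    have hys : (0:ℝ) < y + s := by
      have := neg_abs_le y
      linarith
    simp only [hf]
    have h1 : y + s ≠ 0 := hys.ne'
    have h2 : d ≠ 0 := hd.ne'
    field_simp
    nlinarith [hs2]
  -- change of variables
  have cov := integral_image_eq_integral_abs_deriv_smul measurableSet_Ioi hder hinj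
    (fun t => Real.exp (-t ^ 2))
  rw [himg] at cov
  have hgauss : ∫ x : ℝ, Real.exp (-x ^ 2) = Real.sqrt π := by
    have := integral_gaussian 1
    simpa using this
  rw [Measure.restrict_univ, hgauss] at cov
  -- simplify RHS of cov
  have habs' : ∀ x ∈ Ioi (0:ℝ), |d + c / x ^ 2| • Real.exp (-(f x) ^ 2)
      = (d + c / x ^ 2) * Real.exp (-(f x) ^ 2) := by
    intro x hx
    rw [smul_eq_mul, abs_of_pos (by positivity)]
  rw [setIntegral_congr_fun measurableSet_Ioi habs'] at cov
  -- integrability of total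
  have hint_total : IntegrableOn (fun x => (d + c / x ^ 2) * Real.exp (-(f x) ^ 2)) (Ioi 0) := by
    have := (integrableOn_image_iff_integrableOn_abs_deriv_smul measurableSet_Ioi hder hinj
      (fun t => Real.exp (-t ^ 2))).mp ?_
    · exact (this.congr_fun habs' measurableSet_Ioi)
    · rw [himg]
      rw [integrableOn_univ]
      have : Integrable fun x : ℝ => Real.exp (-1 * x ^ 2) := integrable_exp_neg_mul_sq one_pos
      simpa using this
  -- integrability of the d-part
  have hcont : ContinuousOn (fun x : ℝ => d * Real.exp (-(f x) ^ 2)) (Ioi 0) := by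
    apply ContinuousOn.mul continuousOn_const
    apply Real.continuous_exp.comp_continuousOn
    apply ContinuousOn.neg
    apply ContinuousOn.pow
    exact ContinuousOn.sub (continuousOn_const.mul continuousOn_id)
      (continuousOn_const.div continuousOn_id (fun x hx => ne_of_gt hx))
  have hint_d : IntegrableOn (fun x => d * Real.exp (-(f x) ^ 2)) (Ioi 0) := by
    apply Integrable.mono' hint_total (hcont.aestronglyMeasurable measurableSet_Ioi)
    filter_upwards [ae_restrict_mem measurableSet_Ioi] with x hx
    rw [Real.norm_eq_abs, abs_of_pos (by positivity)]
    have : 0 ≤ c / x ^ 2 * Real.exp (-(f x) ^ 2) := by positivity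
    nlinarith [Real.exp_pos (-(f x)^2)]
  have hint_c : IntegrableOn (fun x => c / x ^ 2 * Real.exp (-(f x) ^ 2)) (Ioi 0) := by
    have := hint_total.sub hint_d
    apply this.congr
    filter_upwards with x
    simp only [Pi.sub_apply]
    ring
  -- symmetry substitution u ↦ c / (d * u)
  set h : ℝ → ℝ := fun u => c / (d * u) with hh
  have hder2 : ∀ x ∈ Ioi (0:ℝ), HasDerivWithinAt h (-(c / (d * x ^ 2))) (Ioi 0) x := by
    intro x hx
    have hx0 : x ≠ 0 := ne_of_gt hx
    have : HasDerivAt (fun u : ℝ => c / (d * u)) (-(c / (d * x ^ 2))) x := by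
      have h2 := (hasDerivAt_inv hx0).const_mul (c / d)
      have heq : (fun u : ℝ => c / d * u⁻¹) = fun u : ℝ => c / (d * u) := by
        funext u; field_simp
      rw [heq] at h2
      refine h2.congr_deriv ?_
      ring
    exact this.hasDerivWithinAt
  have hinj2 : InjOn h (Ioi 0) := by
    apply StrictAntiOn.injOn
    intro x hx y hy hxy
    exact div_lt_div_of_pos_left hc (mul_pos hd hx) (mul_lt_mul_of_pos_left hxy hd)
  have himg2 : h '' Ioi 0 = Ioi 0 := by
    ext y
    constructor
    · rintro ⟨x, hx, rfl⟩
      exact div_pos hc (mul_pos hd hx)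
    · intro hy
      refine ⟨c / (d * y), div_pos hc (mul_pos hd hy), ?_⟩
      simp only [hh]
      field_simp
  have cov2 := integral_image_eq_integral_abs_deriv_smul measurableSet_Ioi hder2 hinj2
    (fun x => d * Real.exp (-(f x) ^ 2))
  rw [himg2] at cov2
  have hsymm : ∀ u ∈ Ioi (0:ℝ), |(-(c / (d * u ^ 2)))| • (d * Real.exp (-(f (h u)) ^ 2))
      = c / u ^ 2 * Real.exp (-(f u) ^ 2) := by
    intro u hu
    have hu0 : u ≠ 0 := ne_of_gt hu
    have hfh : f (h u) = -(f u) := by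
      simp only [hf, hh]
      field_simp
      ring
    rw [smul_eq_mul, hfh, abs_neg, abs_of_pos (show 0 < c / (d * u ^ 2) by positivity), neg_sq]
    field_simp
  rw [setIntegral_congr_fun measurableSet_Ioi hsymm] at cov2
  have hsplit : Real.sqrt π
      = (∫ x in Ioi (0:ℝ), d * Real.exp (-(f x) ^ 2))
        + ∫ x in Ioi (0:ℝ), c / x ^ 2 * Real.exp (-(f x) ^ 2) := by
    rw [cov, ← integral_add hint_d hint_c]
    apply setIntegral_congr_fun measurableSet_Ioi
    intro x hx
    ring
  rw [← cov2, integral_const_mul] at hsplit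
  have : ∫ x in Ioi (0:ℝ), Real.exp (-(f x) ^ 2) = Real.sqrt π / (2 * d) := by
    field_simp at hsplit ⊢
    linarith
  simpa only [hf] using this

lemma key_mix (c d : ℝ) (hc : 0 ≤ c) (hd : 0 < d) :
    ∫ u in Ioi (0:ℝ), Real.exp (-(c ^ 2 / u ^ 2 + d ^ 2 * u ^ 2))
      = Real.sqrt π / (2 * d) * Real.exp (-(2 * c * d)) := by
  rcases eq_or_lt_of_le hc with rfl | hc
  · have heq : ∀ u ∈ Ioi (0:ℝ), Real.exp (-((0:ℝ) ^ 2 / u ^ 2 + d ^ 2 * u ^ 2))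
        = Real.exp (-(d ^ 2 * u ^ 2)) := by
      intro u hu
      norm_num
    rw [setIntegral_congr_fun measurableSet_Ioi heq, gaussian_Ioi (d ^ 2) (by positivity)]
    rw [Real.sqrt_div pi_pos.le, Real.sqrt_sq hd.le]
    rw [mul_zero, zero_mul, neg_zero, Real.exp_zero, mul_one]
    ring
  · have heq : ∀ u ∈ Ioi (0:ℝ), Real.exp (-(c ^ 2 / u ^ 2 + d ^ 2 * u ^ 2))
        = Real.exp (-((d * u - c / u) ^ 2)) * Real.exp (-(2 * c * d)) := by
      intro u hu
      rw [← Real.exp_add]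
      congr 1
      have hu0 : u ≠ 0 := ne_of_gt hu
      field_simp
      ring
    rw [setIntegral_congr_fun measurableSet_Ioi heq, integral_mul_const,
      glasser c d hc hd]

/-- The Laplacian density with variance `σ²` is a scale mixture of Gaussians with
exponential mixing density of parameter `σ²`. -/
theorem laplacian_scale_mixture_of_gaussians (σ v : ℝ) (hσ : 0 < σ) :
    ∫ τ in Set.Ioi (0 : ℝ),
        (Real.sqrt (2 * Real.pi * τ))⁻¹ * Real.exp (-(v ^ 2) / (2 * τ)) *
          ((σ ^ 2)⁻¹ * Real.exp (-(τ / σ ^ 2)))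
      = (Real.sqrt 2 * σ)⁻¹ * Real.exp (-(Real.sqrt 2 * |v|) / σ) := by
  have hderiv : ∀ x ∈ Ioi (0:ℝ), HasDerivWithinAt (fun u : ℝ => u ^ 2) (2 * x) (Ioi 0) x := by
    intro x hx
    simpa using (hasDerivAt_pow 2 x).hasDerivWithinAt
  have hinj : InjOn (fun u : ℝ => u ^ 2) (Ioi 0) := by
    apply StrictMonoOn.injOn
    intro x hx y hy hxy
    exact pow_lt_pow_left₀ hxy (le_of_lt hx) two_ne_zero
  have himg : (fun u : ℝ => u ^ 2) '' Ioi 0 = Ioi 0 := by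
    ext y
    constructor
    · rintro ⟨x, hx, rfl⟩
      exact pow_pos (show (0:ℝ) < x from hx) 2
    · intro hy
      exact ⟨Real.sqrt y, Real.sqrt_pos.mpr hy, Real.sq_sqrt (le_of_lt hy)⟩
  have cov := integral_image_eq_integral_abs_deriv_smul measurableSet_Ioi hderiv hinj
    (fun τ => (Real.sqrt (2 * π * τ))⁻¹ * Real.exp (-(v ^ 2) / (2 * τ)) *
          ((σ ^ 2)⁻¹ * Real.exp (-(τ / σ ^ 2))))
  rw [himg] at cov
  rw [cov]
  set c : ℝ := |v| / Real.sqrt 2 with hcdef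
  set d : ℝ := σ⁻¹ with hddef
  have hs2 : (0:ℝ) < Real.sqrt 2 := Real.sqrt_pos.mpr two_pos
  have hs2sq : Real.sqrt 2 * Real.sqrt 2 = 2 := Real.mul_self_sqrt two_pos.le
  have hsp : (0:ℝ) < Real.sqrt π := Real.sqrt_pos.mpr pi_pos
  have heq : ∀ u ∈ Ioi (0:ℝ), |2 * u| • ((Real.sqrt (2 * π * u ^ 2))⁻¹ *
        Real.exp (-(v ^ 2) / (2 * u ^ 2)) * ((σ ^ 2)⁻¹ * Real.exp (-(u ^ 2 / σ ^ 2))))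
      = (2 / (Real.sqrt 2 * Real.sqrt π * σ ^ 2)) *
          Real.exp (-(c ^ 2 / u ^ 2 + d ^ 2 * u ^ 2)) := by
    intro u hu
    have hu0 : (0:ℝ) < u := hu
    rw [smul_eq_mul, abs_of_pos (by positivity)]
    have hsq : Real.sqrt (2 * π * u ^ 2) = Real.sqrt 2 * Real.sqrt π * u := by
      rw [Real.sqrt_mul (by positivity), Real.sqrt_mul two_pos.le, Real.sqrt_sq hu0.le]
    have hc2 : c ^ 2 = v ^ 2 / 2 := by
      rw [hcdef, div_pow, sq_abs, Real.sq_sqrt two_pos.le]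
    have hd2 : d ^ 2 = (σ ^ 2)⁻¹ := by
      rw [hddef, inv_pow]
    have harg : -(v ^ 2) / (2 * u ^ 2) + -(u ^ 2 / σ ^ 2)
        = -(c ^ 2 / u ^ 2 + d ^ 2 * u ^ 2) := by
      rw [hc2, hd2]
      field_simp
      ring
    rw [hsq, show (Real.sqrt 2 * Real.sqrt π * u)⁻¹ *
        Real.exp (-(v ^ 2) / (2 * u ^ 2)) * ((σ ^ 2)⁻¹ * Real.exp (-(u ^ 2 / σ ^ 2)))
        = (Real.sqrt 2 * Real.sqrt π * u)⁻¹ * (σ ^ 2)⁻¹ *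
          (Real.exp (-(v ^ 2) / (2 * u ^ 2)) * Real.exp (-(u ^ 2 / σ ^ 2))) from by ring,
      ← Real.exp_add, harg]
    field_simp
  rw [setIntegral_congr_fun measurableSet_Ioi heq, integral_const_mul,
    key_mix c d (by positivity) (by positivity)]
  have hcd : 2 * c * d = Real.sqrt 2 * |v| / σ := by
    rw [hcdef, hddef]
    field_simp
    linear_combination (-(|v|)) * Real.sq_sqrt (by norm_num : (0:ℝ) ≤ 2)
  rw [hcd, hddef]
  rw [show -(Real.sqrt 2 * |v| / σ) = -(Real.sqrt 2 * |v|) / σ from by ring]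
  rw [show 2 / (Real.sqrt 2 * Real.sqrt π * σ ^ 2) * (Real.sqrt π / (2 * σ⁻¹) *
      Real.exp (-(Real.sqrt 2 * |v|) / σ)) = (2 * Real.sqrt π * σ) /
      (Real.sqrt 2 * Real.sqrt π * σ ^ 2 * 2) * Real.exp (-(Real.sqrt 2 * |v|) / σ) from by
    field_simp]
  congr 1
  field_simp
end

section
/- Let n be a positive integer and β ∈ ℝ. Let K_β be the n×n matrix with entries (K_β)_{i,j} = β^(max(i,j)), let Δ be the n×n upper bidiagonal matrix with 1 on the main diagonal, −1 on the superdiagonal, and 0 elsewhere, and let W_β be the n×n diagonal matrix with diagonal entries (W_β)_{i,i} = (1−β)·β^i for i = 1,…,n−1 and (W_β)_{n,n} = β^n. Then Δ·K_β·Δᵀ = W_β. -/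
open Matrix

def ssKernel (n : ℕ) (β : ℝ) : Matrix (Fin n) (Fin n) ℝ :=
  Matrix.of fun i j => β ^ (max (i : ℕ) (j : ℕ) + 1)

def deltaMat (n : ℕ) : Matrix (Fin n) (Fin n) ℝ :=
  Matrix.of fun i j => if j = i then 1 else if (j : ℕ) = (i : ℕ) + 1 then -1 else 0

def wMat (n : ℕ) (β : ℝ) : Matrix (Fin n) (Fin n) ℝ :=
  Matrix.diagonal fun i => if (i : ℕ) + 1 = n then β ^ n else (1 - β) * β ^ ((i : ℕ) + 1)

lemma deltaRowSum {n : ℕ} (i : Fin n) (f : Fin n → ℝ) :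
    ∑ k, deltaMat n i k * f k
      = f i - (if h : (i : ℕ) + 1 < n then f ⟨(i : ℕ) + 1, h⟩ else 0) := by
  have key : ∀ k : Fin n, deltaMat n i k * f k
      = (if k = i then f k else 0) - (if (k : ℕ) = (i : ℕ) + 1 then f k else 0) := by
    intro k
    simp only [deltaMat, Matrix.of_apply]
    split_ifs with h1 h2
    · omega
    · ring
    · ring
    · ring
  rw [Finset.sum_congr rfl fun k _ => key k, Finset.sum_sub_distrib]
  congr 1
  · simp
  · split_ifs with h
    · have e : ∀ k : Fin n, ((k : ℕ) = (i : ℕ) + 1) ↔ k = ⟨(i:ℕ)+1, h⟩ := by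
        intro k; simp [Fin.ext_iff]
      simp only [e]
      simp
    · rw [Finset.sum_eq_zero]
      intro k _
      have : (k : ℕ) ≠ (i : ℕ) + 1 := by omega
      simp [this]

/-- Factorization of the first-order stable spline kernel: `Δ K_β Δᵀ = W_β`. -/
theorem delta_ssKernel_delta_transpose (n : ℕ) (hn : 0 < n) (β : ℝ) :
    deltaMat n * ssKernel n β * (deltaMat n)ᵀ = wMat n β := by
  ext i j
  have h1 : (deltaMat n * ssKernel n β * (deltaMat n)ᵀ) i j
      = ∑ l, deltaMat n j l * (deltaMat n * ssKernel n β) i l := by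
    rw [Matrix.mul_apply]
    simp [Matrix.transpose_apply, mul_comm]
  have h2 : ∀ l : Fin n, (deltaMat n * ssKernel n β) i l
      = ssKernel n β i l - (if h : (i : ℕ) + 1 < n then ssKernel n β ⟨(i:ℕ)+1, h⟩ l else 0) := by
    intro l
    rw [Matrix.mul_apply, deltaRowSum]
  rw [h1, deltaRowSum]
  simp only [h2]
  simp only [ssKernel, Matrix.of_apply, wMat, Matrix.diagonal_apply]
  have hi := i.isLt
  have hj := j.isLt
  by_cases hi1 : (i:ℕ) + 1 < n <;> by_cases hj1 : (j:ℕ) + 1 < n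
  · simp only [dif_pos hi1, dif_pos hj1]
    by_cases hij : i = j
    · subst hij
      rw [if_pos rfl, if_neg (by omega)]
      have m1 : max (i:ℕ) (i:ℕ) = (i:ℕ) := by omega
      have m2 : max ((i:ℕ)+1) (i:ℕ) = (i:ℕ)+1 := by omega
      have m3 : max (i:ℕ) ((i:ℕ)+1) = (i:ℕ)+1 := by omega
      have m4 : max ((i:ℕ)+1) ((i:ℕ)+1) = (i:ℕ)+1 := by omega
      rw [m1, m2, m3, m4]; ring
    · rw [if_neg hij]
      have hij' : (i:ℕ) ≠ (j:ℕ) := fun h => hij (Fin.ext h)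
      rcases lt_or_gt_of_ne hij' with hlt | hgt
      · have m1 : max (i:ℕ) (j:ℕ) = (j:ℕ) := by omega
        have m2 : max ((i:ℕ)+1) (j:ℕ) = (j:ℕ) := by omega
        have m3 : max (i:ℕ) ((j:ℕ)+1) = (j:ℕ)+1 := by omega
        have m4 : max ((i:ℕ)+1) ((j:ℕ)+1) = (j:ℕ)+1 := by omega
        rw [m1, m2, m3, m4]; ring
      · have m1 : max (i:ℕ) (j:ℕ) = (i:ℕ) := by omega
        have m2 : max ((i:ℕ)+1) (j:ℕ) = (i:ℕ)+1 := by omega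
        have m3 : max (i:ℕ) ((j:ℕ)+1) = (i:ℕ) := by omega
        have m4 : max ((i:ℕ)+1) ((j:ℕ)+1) = (i:ℕ)+1 := by omega
        rw [m1, m2, m3, m4]; ring
  · -- i+1 < n, j+1 = n, so i < j
    have hij : i ≠ j := fun h => by subst h; omega
    simp only [dif_pos hi1, dif_neg hj1, if_neg hij]
    have m1 : max (i:ℕ) (j:ℕ) = (j:ℕ) := by omega
    have m2 : max ((i:ℕ)+1) (j:ℕ) = (j:ℕ) := by omega
    rw [m1, m2]; ring
  · -- i+1 = n, j+1 < n, so j < i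
    have hij : i ≠ j := fun h => by subst h; omega
    simp only [dif_neg hi1, dif_pos hj1, if_neg hij]
    have m1 : max (i:ℕ) (j:ℕ) = (i:ℕ) := by omega
    have m2 : max (i:ℕ) ((j:ℕ)+1) = (i:ℕ) := by omega
    rw [m1, m2]; ring
  · -- i = j = n-1
    have hij : i = j := Fin.ext (by omega)
    subst hij
    simp only [dif_neg hi1, if_pos rfl, if_pos (by omega : (i:ℕ)+1 = n)]
    rw [max_self, (by omega : (i:ℕ)+1 = n)]
    simp
end

section
/- Let n be a positive integer and β ∈ ℝ. The determinant of the n×n first-order stable spline kernel matrix K_β with entries (K_β)_{i,j} = β^(max(i,j)) is det K_β = (1−β)^(n−1) · β^(n(n+1)/2). -/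
open Matrix Finset

lemma aux_sum (m : ℕ) : ∑ i ∈ range m, (m - i) = m * (m + 1) / 2 := by
  have h1 : ∑ i ∈ range m, (m - i) = ∑ i ∈ range m, (i + 1) := by
    rw [← Finset.sum_range_reflect]
    refine Finset.sum_congr rfl fun j hj => ?_
    rw [Finset.mem_range] at hj
    omega
  have h2 : ∑ i ∈ range (m + 1), i = ∑ i ∈ range m, (i + 1) + 0 :=
    Finset.sum_range_succ' id m
  rw [h1, ← add_zero (∑ i ∈ range m, (i + 1)), ← h2, Finset.sum_range_id]
  have : (m + 1) * (m + 1 - 1) = m * (m + 1) := by rw [Nat.add_sub_cancel, Nat.mul_comm]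
  rw [this]

/-- Determinant of the first-order stable spline kernel:
`det K_β = (1−β)^(n−1) · β^(n(n+1)/2)`. -/
theorem ssKernel_det (n : ℕ) (hn : 0 < n) (β : ℝ) :
    (ssKernel n β).det = (1 - β) ^ (n - 1) * β ^ (n * (n + 1) / 2) := by
  obtain ⟨m, rfl⟩ := Nat.exists_eq_succ_of_ne_zero hn.ne'
  set A : Matrix (Fin (m + 1)) (Fin (m + 1)) ℝ :=
    Matrix.of (fun i j => β ^ (m + 1 - min (i : ℕ) (j : ℕ))) with hA
  have hsub : ssKernel (m + 1) β = A.submatrix Fin.rev Fin.rev := by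
    ext i j
    simp only [ssKernel, hA, Matrix.submatrix_apply, Matrix.of_apply, Fin.val_rev]
    congr 1
    have hi := i.isLt
    have hj := j.isLt
    omega
  set B : Matrix (Fin (m + 1)) (Fin (m + 1)) ℝ :=
    Matrix.of (fun i j => if (j : ℕ) < (i : ℕ) then 0 else
      if (i : ℕ) = 0 then β ^ (m + 1) else (1 - β) * β ^ (m + 1 - (i : ℕ))) with hB
  have hdetAB : A.det = B.det := by
    apply Matrix.det_eq_of_forall_row_eq_smul_add_pred (fun _ => 1)
    · intro j
      simp [hA, hB]
    · intro i j
      have hsucc : ((Fin.succ i : Fin (m + 1)) : ℕ) = (i : ℕ) + 1 := rfl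
      have hcast : ((Fin.castSucc i : Fin (m + 1)) : ℕ) = (i : ℕ) := rfl
      simp only [hA, hB, Matrix.of_apply, hsucc, hcast, one_mul]
      rcases lt_or_ge (j : ℕ) ((i : ℕ) + 1) with h | h
      · rw [if_pos h]
        have hmin : min ((i : ℕ) + 1) (j : ℕ) = min (i : ℕ) (j : ℕ) := by omega
        rw [hmin, zero_add]
      · rw [if_neg (by omega), if_neg (by omega)]
        have h1 : min ((i : ℕ) + 1) (j : ℕ) = (i : ℕ) + 1 := by omega
        have h2 : min (i : ℕ) (j : ℕ) = (i : ℕ) := by omega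
        have h3 : m + 1 - ((i : ℕ) + 1) = m - (i : ℕ) := by omega
        have h4 : m + 1 - (i : ℕ) = (m - (i : ℕ)) + 1 := by
          have := i.isLt; omega
        rw [h1, h2, h3, h4, pow_succ]
        ring
  have hdetB : B.det = ∏ i : Fin (m + 1), B i i := by
    apply Matrix.det_of_upperTriangular
    intro i j hij
    simp only [hB, Matrix.of_apply]
    rw [if_pos (by exact_mod_cast hij)]
  have hprod : ∏ i : Fin (m + 1), B i i
      = (1 - β) ^ m * β ^ ((m + 1) * (m + 2) / 2) := by
    rw [Fin.prod_univ_succ]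
    have h0 : B 0 0 = β ^ (m + 1) := by simp [hB]
    have hs : ∀ i : Fin m, B i.succ i.succ = (1 - β) * β ^ (m - (i : ℕ)) := by
      intro i
      have hsucc : ((Fin.succ i : Fin (m + 1)) : ℕ) = (i : ℕ) + 1 := rfl
      simp only [hB, Matrix.of_apply, hsucc]
      rw [if_neg (by omega), if_neg (by omega)]
      have h3 : m + 1 - ((i : ℕ) + 1) = m - (i : ℕ) := by omega
      rw [h3]
    rw [h0, Finset.prod_congr rfl (fun i _ => hs i), Finset.prod_mul_distrib,
      Finset.prod_const, Finset.card_univ, Fintype.card_fin,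
      Finset.prod_pow_eq_pow_sum, Fin.sum_univ_eq_sum_range, aux_sum,
      ← mul_assoc, mul_comm (β ^ (m + 1)) ((1 - β) ^ m), mul_assoc, ← pow_add]
    congr 2
    have key : (m + 1) * (m + 2) = m * (m + 1) + 2 * (m + 1) := by ring
    have e1 : 2 ∣ m * (m + 1) := (Nat.even_mul_succ_self m).two_dvd
    omega
  have hperm : A.submatrix Fin.rev Fin.rev = A.submatrix ⇑Fin.revPerm ⇑Fin.revPerm := rfl
  rw [hsub, hperm, Matrix.det_submatrix_equiv_self, hdetAB, hdetB, hprod]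
  have h5 : Nat.succ m * (Nat.succ m + 1) = (m + 1) * (m + 2) := rfl
  rw [Nat.succ_sub_one, h5]
end

section
/- Let n be a positive integer and β ∈ (0, 1). Then the n×n first-order stable spline kernel matrix K_β with entries (K_β)_{i,j} = β^(max(i,j)) is symmetric positive definite; in particular it is a valid covariance matrix for the Gaussian prior on the impulse response. -/
open Matrix

private lemma ss_tele (f : ℕ → ℝ) :
    ∀ N m, m ≤ N →
      ∑ k ∈ Finset.range N, (if m ≤ k then f k - f (k + 1) else 0) = f m - f N := by
  intro N
  induction N with
  | zero => intro m hm; interval_cases m; simp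
  | succ N ih =>
    intro m hm
    rw [Finset.sum_range_succ]
    rcases Nat.lt_or_ge m (N + 1) with h | h
    · have hmN : m ≤ N := Nat.lt_succ_iff.mp h
      rw [ih m hmN, if_pos hmN]
      ring
    · have hm' : m = N + 1 := le_antisymm hm h
      subst hm'
      rw [if_neg (by omega)]
      have : ∑ k ∈ Finset.range N, (if N + 1 ≤ k then f k - f (k + 1) else 0) = 0 := by
        apply Finset.sum_eq_zero
        intro k hk
        rw [if_neg (by simp at hk; omega)]
      rw [this]; ring

/-- For `β ∈ (0,1)`, the first-order stable spline kernel is symmetric positive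
definite, hence a valid covariance matrix. -/
theorem ssKernel_posDef (n : ℕ) (hn : 0 < n) (β : ℝ) (hβ : β ∈ Set.Ioo (0 : ℝ) 1) :
    (ssKernel n β).PosDef := by
  obtain ⟨hβ0, hβ1⟩ := hβ
  -- telescoping weights
  set g : ℕ → ℝ := fun k => if k < n then β ^ (k + 1) else 0 with hg
  set d : ℕ → ℝ := fun k => g k - g (k + 1) with hd
  have hdpos : ∀ k : ℕ, k < n → 0 < d k := by
    intro k hk
    simp only [hd, hg, if_pos hk]
    rcases Nat.lt_or_ge (k + 1) n with h | h
    · rw [if_pos h]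
      have : β ^ (k + 1 + 1) = β ^ (k + 1) * β := by ring
      rw [this]
      nlinarith [pow_pos hβ0 (k + 1)]
    · rw [if_neg (by omega)]
      simpa using pow_pos hβ0 (k + 1)
  -- the square-root factor
  set A : Matrix (Fin n) (Fin n) ℝ :=
    Matrix.of (fun k i : Fin n => if (i : ℕ) ≤ (k : ℕ) then Real.sqrt (d k) else 0) with hA
  -- K = Aᵀ * A
  have hfact : ssKernel n β = Aᵀ * A := by
    ext i j
    simp only [ssKernel, Matrix.of_apply, Matrix.mul_apply, Matrix.transpose_apply, hA]
    have step : ∀ k : Fin n,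
        (if (i : ℕ) ≤ (k : ℕ) then Real.sqrt (d k) else 0) *
          (if (j : ℕ) ≤ (k : ℕ) then Real.sqrt (d k) else 0) =
        (if max (i : ℕ) (j : ℕ) ≤ (k : ℕ) then d k else 0) := by
      intro k
      by_cases h1 : (i : ℕ) ≤ (k : ℕ) <;> by_cases h2 : (j : ℕ) ≤ (k : ℕ) <;>
        simp [h1, h2, max_le_iff, Real.mul_self_sqrt (le_of_lt (hdpos k k.isLt))]
    rw [Finset.sum_congr rfl fun k _ => step k]
    have := ss_tele g n (max (i : ℕ) (j : ℕ))
      (le_of_lt (max_lt i.isLt j.isLt))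
    rw [Fin.sum_univ_eq_sum_range (fun k => if max (i : ℕ) (j : ℕ) ≤ k then d k else 0) n]
    simp only [hd] at this ⊢
    rw [this]
    simp [hg, max_lt i.isLt j.isLt]
  -- A has nonzero determinant (lower triangular, positive diagonal)
  have hAdet : A.det ≠ 0 := by
    have htri : A.BlockTriangular OrderDual.toDual := by
      intro k i h
      simp only [hA, Matrix.of_apply]
      rw [if_neg]
      exact fun hc => absurd (Fin.le_def.mpr hc) (not_le.mpr h)
    rw [Matrix.det_of_lowerTriangular A htri]
    apply ne_of_gt
    apply Finset.prod_pos
    intro k _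
    simp only [hA, Matrix.of_apply, le_refl, if_pos]
    exact Real.sqrt_pos.mpr (hdpos k k.isLt)
  rw [Matrix.posDef_iff_dotProduct_mulVec]
  constructor
  · -- Hermitian
    ext i j
    simp [ssKernel, max_comm]
  · intro x hx
    have hAx : A *ᵥ x ≠ 0 := by
      intro hc
      apply hx
      have hinj : Function.Injective (A.mulVec) :=
        Matrix.mulVec_injective_iff_isUnit.mpr
          ((Matrix.isUnit_iff_isUnit_det A).mpr (isUnit_iff_ne_zero.mpr hAdet))
      have : A *ᵥ x = A *ᵥ 0 := by rw [hc, Matrix.mulVec_zero]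
      exact hinj this
    rw [hfact]
    have : star x ⬝ᵥ (Aᵀ * A) *ᵥ x = (A *ᵥ x) ⬝ᵥ (A *ᵥ x) := by
      rw [star_trivial, ← Matrix.mulVec_mulVec, dotProduct_mulVec,
        Matrix.vecMul_transpose]
    rw [this]
    have h0 : (A *ᵥ x) ⬝ᵥ (A *ᵥ x) ≠ 0 := fun hc => hAx (dotProduct_self_eq_zero.mp hc)
    have h1 : 0 ≤ (A *ᵥ x) ⬝ᵥ (A *ᵥ x) := by
      apply Finset.sum_nonneg
      intro i _
      exact mul_self_nonneg _
    exact lt_of_le_of_ne h1 (Ne.symm h0)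
end

section
/- Let n be a positive integer and β ∈ (0, 1). Then the n×n first-order stable spline kernel matrix K_β is invertible and K_β^(−1) = Δᵀ·W_β^(−1)·Δ, where Δ is the n×n upper bidiagonal matrix with 1 on the main diagonal, −1 on the superdiagonal, and 0 elsewhere, and W_β is the n×n diagonal matrix with diagonal entries (1−β)·β^i for i = 1,…,n−1 and β^n for i = n. -/
open Matrix

lemma delta_mul_apply (n : ℕ) (A : Matrix (Fin n) (Fin n) ℝ) (i j : Fin n) :
    (deltaMat n * A) i j
      = A i j - (if h : (i : ℕ) + 1 < n then A ⟨(i : ℕ) + 1, h⟩ j else 0) := by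
  rw [Matrix.mul_apply]
  have hsum : ∀ k : Fin n, deltaMat n i k * A k j =
      (if k = i then A k j else 0) + (if (k : ℕ) = (i : ℕ) + 1 then -(A k j) else 0) := by
    intro k
    simp only [deltaMat, Matrix.of_apply]
    by_cases hk : k = i
    · subst hk
      have h2 : ¬ ((k : ℕ) = (k : ℕ) + 1) := by omega
      simp [h2]
    · by_cases hk2 : (k : ℕ) = (i : ℕ) + 1
      · simp [hk, hk2]
      · simp [hk, hk2]
  rw [Finset.sum_congr rfl (fun k _ => hsum k), Finset.sum_add_distrib,
    Finset.sum_ite_eq' Finset.univ i (fun k => A k j)]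
  simp only [Finset.mem_univ, if_true]
  rw [sub_eq_add_neg]
  congr 1
  by_cases h : (i : ℕ) + 1 < n
  · rw [dif_pos h]
    have hcond : ∀ k : Fin n, ((k : ℕ) = (i : ℕ) + 1) ↔ k = ⟨(i : ℕ) + 1, h⟩ := by
      intro k
      constructor
      · intro hk; exact Fin.ext hk
      · intro hk; subst hk; rfl
    simp_rw [hcond]
    rw [Finset.sum_ite_eq' Finset.univ (⟨(i : ℕ) + 1, h⟩ : Fin n) (fun k => -(A k j))]
    simp
  · rw [dif_neg h, neg_zero]
    apply Finset.sum_eq_zero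
    intro k _
    have : ¬ ((k : ℕ) = (i : ℕ) + 1) := by
      have := k.isLt
      omega
    simp [this]

lemma mul_deltaT_apply (n : ℕ) (A : Matrix (Fin n) (Fin n) ℝ) (i j : Fin n) :
    (A * (deltaMat n)ᵀ) i j
      = A i j - (if h : (j : ℕ) + 1 < n then A i ⟨(j : ℕ) + 1, h⟩ else 0) := by
  have : (A * (deltaMat n)ᵀ) i j = (deltaMat n * Aᵀ) j i := by
    rw [← Matrix.transpose_apply (deltaMat n * Aᵀ), Matrix.transpose_mul,
      Matrix.transpose_transpose]
  rw [this, delta_mul_apply]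
  rfl

lemma key (n : ℕ) (β : ℝ) :
    deltaMat n * ssKernel n β * (deltaMat n)ᵀ = wMat n β := by
  ext i j
  simp only [mul_deltaT_apply, delta_mul_apply, ssKernel, wMat, Matrix.of_apply,
    Matrix.diagonal_apply]
  rcases Nat.lt_trichotomy (i : ℕ) (j : ℕ) with h | h | h
  · -- i < j
    have hi : (i : ℕ) + 1 < n := by have := j.isLt; omega
    have hij : ¬ (i = j) := by intro hh; subst hh; omega
    rw [dif_pos hi, if_neg hij]
    by_cases hj : (j : ℕ) + 1 < n
    · rw [dif_pos hj, dif_pos hi]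
      try simp only [Fin.val_mk]
      rw [max_eq_right h.le, max_eq_right (by omega : (i:ℕ)+1 ≤ (j:ℕ)),
        max_eq_right (by omega : (i:ℕ) ≤ (j:ℕ)+1),
        max_eq_right (by omega : (i:ℕ)+1 ≤ (j:ℕ)+1)]
      ring
    · rw [dif_neg hj]
      try simp only [Fin.val_mk]
      rw [max_eq_right h.le, max_eq_right (by omega : (i:ℕ)+1 ≤ (j:ℕ))]
      ring
  · -- i = j
    have hij : i = j := Fin.ext h
    rw [if_pos hij]
    subst hij
    by_cases hi : (i : ℕ) + 1 < n
    · have hn : ¬ ((i : ℕ) + 1 = n) := by omega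
      rw [dif_pos hi, dif_pos hi, dif_pos hi, if_neg hn]
      try simp only [Fin.val_mk]
      rw [max_self, max_eq_left (by omega : (i:ℕ) ≤ (i:ℕ)+1),
        max_eq_right (by omega : (i:ℕ) ≤ (i:ℕ)+1), max_self]
      ring
    · have hn : (i : ℕ) + 1 = n := by have := i.isLt; omega
      rw [dif_neg hi, dif_neg hi, if_pos hn, max_self, hn]
      ring
  · -- j < i
    have hj : (j : ℕ) + 1 < n := by have := i.isLt; omega
    have hij : ¬ (i = j) := by intro hh; subst hh; omega
    rw [dif_pos hj, if_neg hij]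
    by_cases hi : (i : ℕ) + 1 < n
    · rw [dif_pos hi, dif_pos hi]
      try simp only [Fin.val_mk]
      rw [max_eq_left h.le, max_eq_left (by omega : (j:ℕ) ≤ (i:ℕ)+1),
        max_eq_left (by omega : (j:ℕ)+1 ≤ (i:ℕ)),
        max_eq_left (by omega : (j:ℕ)+1 ≤ (i:ℕ)+1)]
      ring
    · rw [dif_neg hi, dif_neg hi]
      try simp only [Fin.val_mk]
      rw [max_eq_left h.le, max_eq_left (by omega : (j:ℕ)+1 ≤ (i:ℕ))]
      ring

lemma delta_det (n : ℕ) : (deltaMat n).det = 1 := by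
  rw [Matrix.det_of_upperTriangular]
  · apply Finset.prod_eq_one
    intro i _
    simp [deltaMat]
  · intro i j hji
    have h1 : ¬ (j = i) := by intro hh; subst hh; exact lt_irrefl _ hji
    have h2 : ¬ ((j : ℕ) = (i : ℕ) + 1) := by
      have : (j : ℕ) < (i : ℕ) := hji
      omega
    simp [deltaMat, h1, h2]

/-- For `β ∈ (0,1)`, the stable spline kernel is invertible with
`K_β⁻¹ = Δᵀ W_β⁻¹ Δ`. -/
theorem ssKernel_inv (n : ℕ) (hn : 0 < n) (β : ℝ) (hβ : β ∈ Set.Ioo (0 : ℝ) 1) :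
    IsUnit (ssKernel n β) ∧
      (ssKernel n β)⁻¹ = (deltaMat n)ᵀ * (wMat n β)⁻¹ * deltaMat n := by
  obtain ⟨hβ0, hβ1⟩ := hβ
  have hW : IsUnit (wMat n β).det := by
    rw [wMat, Matrix.det_diagonal]
    refine isUnit_iff_ne_zero.2 (Finset.prod_ne_zero_iff.2 ?_)
    intro i _
    split_ifs
    · positivity
    · have : (0:ℝ) < 1 - β := by linarith
      positivity
  have hΔ : IsUnit (deltaMat n).det := by rw [delta_det]; exact isUnit_one
  have hΔT : IsUnit ((deltaMat n)ᵀ).det := by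
    rw [Matrix.det_transpose, delta_det]; exact isUnit_one
  have hkey := key n β
  have hK : IsUnit (ssKernel n β).det := by
    have hdet : (deltaMat n).det * (ssKernel n β).det * ((deltaMat n)ᵀ).det
        = (wMat n β).det := by
      rw [← Matrix.det_mul, ← Matrix.det_mul, hkey]
    rw [delta_det, Matrix.det_transpose, delta_det, one_mul, mul_one] at hdet
    rw [hdet]; exact hW
  refine ⟨(Matrix.isUnit_iff_isUnit_det _).2 hK, ?_⟩
  have hKeq : ssKernel n β = (deltaMat n)⁻¹ * wMat n β * ((deltaMat n)ᵀ)⁻¹ := by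
    rw [← hkey]
    rw [Matrix.mul_assoc (deltaMat n) (ssKernel n β) ((deltaMat n)ᵀ),
      ← Matrix.mul_assoc ((deltaMat n)⁻¹), Matrix.nonsing_inv_mul _ hΔ, Matrix.one_mul,
      Matrix.mul_assoc, Matrix.mul_nonsing_inv _ hΔT, Matrix.mul_one]
  rw [hKeq, Matrix.mul_inv_rev, Matrix.mul_inv_rev,
    Matrix.nonsing_inv_nonsing_inv _ hΔ, Matrix.nonsing_inv_nonsing_inv _ hΔT,
    Matrix.mul_assoc]
end

section
/- (Proposition 1, Laplacian grouped noise-variance update.) Let ζ > 0, σ > 0, and let m be a positive integer. The function Q(Υ) = ζ/Υ + m·log Υ + (2/σ²)·Υ on (0, ∞) has a unique global minimizer, attained at Υ* = (m·σ²/4)·(√(1 + 8ζ/(m²σ²)) − 1). -/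
open Real

/-- Proposition 1, Laplacian grouped noise-variance update:
`Q(Υ) = ζ/Υ + m log Υ + (2/σ²)Υ` on `(0, ∞)` has the unique global minimizer
`Υ* = (mσ²/4)(√(1 + 8ζ/(m²σ²)) − 1)`. -/
theorem laplacian_grouped_update (ζ σ : ℝ) (hζ : 0 < ζ) (hσ : 0 < σ)
    (m : ℕ) (hm : 0 < m) (Υs : ℝ)
    (hΥs : Υs = m * σ ^ 2 / 4 * (Real.sqrt (1 + 8 * ζ / (m ^ 2 * σ ^ 2)) - 1)) :
    0 < Υs ∧
      ∀ Υ : ℝ, 0 < Υ → Υ ≠ Υs →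
        ζ / Υs + m * Real.log Υs + 2 / σ ^ 2 * Υs
          < ζ / Υ + m * Real.log Υ + 2 / σ ^ 2 * Υ := by
  have hmpos : (0:ℝ) < m := by exact_mod_cast hm
  have hσ2 : (0:ℝ) < σ ^ 2 := by positivity
  have ha : (0:ℝ) < 8 * ζ / (m ^ 2 * σ ^ 2) := by positivity
  set s := Real.sqrt (1 + 8 * ζ / (m ^ 2 * σ ^ 2)) with hsdef
  have hs2 : s ^ 2 = 1 + 8 * ζ / (m ^ 2 * σ ^ 2) := Real.sq_sqrt (by linarith)
  have hsnn : 0 ≤ s := Real.sqrt_nonneg _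
  have hs1 : 1 < s := by nlinarith
  have hΥpos : 0 < Υs := by
    rw [hΥs]; have : 0 < s - 1 := by linarith
    positivity
  have hζeq : ζ = 2 / σ ^ 2 * Υs ^ 2 + m * Υs := by
    have h8 : 8 * ζ = (s ^ 2 - 1) * ((m:ℝ) ^ 2 * σ ^ 2) := by
      field_simp at hs2
      linarith
    rw [hΥs]
    field_simp
    nlinarith [h8]
  refine ⟨hΥpos, fun Υ hΥ hne => ?_⟩
  have hratio : Υs / Υ ≠ 1 := by
    intro h
    apply hne
    field_simp at h
    linarith
  have hlog : Real.log (Υs / Υ) < Υs / Υ - 1 :=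
    Real.log_lt_sub_one_of_pos (by positivity) hratio
  rw [Real.log_div (ne_of_gt hΥpos) (ne_of_gt hΥ)] at hlog
  have h1 : (m:ℝ) * Real.log Υs - m * Real.log Υ < m * (Υs / Υ - 1) := by
    have := mul_lt_mul_of_pos_left hlog hmpos
    linarith [this]
  have h2 : ζ / Υs + 2 / σ ^ 2 * Υs + m * (Υs / Υ - 1) ≤ ζ / Υ + 2 / σ ^ 2 * Υ := by
    rw [← sub_nonneg]
    have key : ζ / Υ + 2 / σ ^ 2 * Υ - (ζ / Υs + 2 / σ ^ 2 * Υs + m * (Υs / Υ - 1))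
        = 2 / σ ^ 2 * (Υ - Υs) ^ 2 / Υ := by
      rw [hζeq]
      field_simp
      ring
    rw [key]
    positivity
  linarith
end
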